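/- Let x₁,…,x_r be the r-tuples of distinct (r+k)-th roots of unity written as x_j = exp(2πi n_j/(r+k)) with 0 ≤ n_r < … < n₁ < r+k. Then for the Schur polynomial s_λ with λ ∈ P_{r,k}, one has s_λ(x₁,…,x_r) = det(x_i^{λ^j + r−j}) / Π_{i<j}(x_i − x_j), and s_{λ*}(x₁,…,x_r) = \overline{s_λ(x₁,…,x_r)} · (x₁⋯x_r)^k, where λ* is the conjugate partition (k−λ^r,…,k−λ¹). -/
import Mathlib

open Finset Complex

/-- `l ∈ P_{r,k}`: a Young diagram with at most `r` rows and at most `k` columns. -/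
def InBox (r k : ℕ) (l : Fin r → ℕ) : Prop :=
  (∀ i, l i ≤ k) ∧ ∀ i j : Fin r, i ≤ j → l j ≤ l i

/-- The conjugate partition `λ* = (k − λ^r, …, k − λ¹)` in `P_{r,k}`. -/
def conjPartition (r k : ℕ) (l : Fin r → ℕ) : Fin r → ℕ :=
  fun i => k - l (Fin.rev i)

/-- The Schur polynomial of `λ`, evaluated at `x₁, …, x_r`, via the bialternant
formula `s_λ(x) = det(x_i^{λ^j + r − j}) / ∏_{i<j}(x_i − x_j)`. -/
noncomputable def schurEval (r : ℕ) (l : Fin r → ℕ) (x : Fin r → ℂ) : ℂ :=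
  (Matrix.of fun i j : Fin r => x i ^ (l j + (r - 1 - (j : ℕ)))).det /
    ∏ i, ∏ j ∈ Finset.univ.filter (fun j : Fin r => i < j), (x i - x j)

lemma sign_revPerm (n : ℕ) :
    Equiv.Perm.sign (Fin.revPerm : Equiv.Perm (Fin n)) = (-1) ^ (∑ i ∈ Finset.range n, i) := by
  induction n with
  | zero => decide
  | succ n ih =>
    have hτ : (Fin.revPerm : Equiv.Perm (Fin (n + 1))) =
        finRotate (n + 1) *
          ((finSuccEquivLast (n := n)).symm.permCongr
            (Equiv.optionCongr (Fin.revPerm : Equiv.Perm (Fin n)))) := by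
      ext x
      refine Fin.lastCases ?_ ?_ x
      · simp [Equiv.Perm.mul_apply, Equiv.permCongr_apply, finSuccEquivLast_last,
          finRotate_last, Fin.rev_last]
      · intro i
        simp only [Fin.revPerm_apply, Equiv.Perm.mul_apply, Equiv.permCongr_apply,
          Equiv.symm_symm, finSuccEquivLast_castSucc, Equiv.optionCongr_apply,
          Option.map_some, finSuccEquivLast_symm_some, finRotate_succ_apply]
        rw [Fin.rev_castSucc, Fin.coeSucc_eq_succ]
    rw [hτ, Equiv.Perm.sign_mul, sign_finRotate, Equiv.Perm.sign_permCongr,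
      Equiv.optionCongr_sign, ih, Finset.sum_range_succ, pow_add]
    exact mul_comm _ _

lemma schur_conj_aux (r k : ℕ) (hr : 0 < r) (l : Fin r → ℕ) (hl : ∀ i, l i ≤ k)
    (x : Fin r → ℂ) (hx0 : ∀ i, x i ≠ 0) (hxm : ∀ i, x i ^ (r + k) = 1)
    (hxc : ∀ i, (starRingEnd ℂ) (x i) = (x i)⁻¹) :
    schurEval r (conjPartition r k l) x =
      (starRingEnd ℂ) (schurEval r l x) * (∏ i, x i) ^ k := by
  have hcpow : ∀ (i : Fin r) (t : ℕ), t + 1 ≤ r + k →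
      (starRingEnd ℂ) (x i ^ t) = x i ^ (r + k - 1 - t) * x i := by
    intro i t ht
    have h1 : (x i ^ (r + k - 1 - t) * x i) * x i ^ t = 1 := by
      rw [← pow_succ, ← pow_add]
      have he : (r + k - 1 - t) + 1 + t = r + k := by omega
      rw [he, hxm i]
    rw [map_pow, hxc i, inv_pow]
    exact inv_eq_of_mul_eq_one_left h1
  set p := ∏ i, x i with hpdef
  have hp : p ≠ 0 := Finset.prod_ne_zero_iff.mpr fun i _ => hx0 i
  have hpm : p ^ (r + k) = 1 := by
    rw [hpdef, ← Finset.prod_pow]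
    exact Finset.prod_eq_one fun i _ => hxm i
  unfold schurEval
  set T := ∑ i ∈ Finset.range r, i with hTdef
  set D := ∏ i, ∏ j ∈ Finset.univ.filter (fun j : Fin r => i < j), (x i - x j) with hDdef
  set N := (Matrix.of fun i j : Fin r => x i ^ (l j + (r - 1 - (j : ℕ)))).det with hNdef
  set N' := (Matrix.of fun i j : Fin r =>
      x i ^ (conjPartition r k l j + (r - 1 - (j : ℕ)))).det with hN'def
  -- numerator relation
  have hNum : (starRingEnd ℂ) N = p * ((-1 : ℂ) ^ T) * N' := by
    rw [hNdef, RingHom.map_det, RingHom.mapMatrix_apply]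
    have hmat : (Matrix.of fun i j : Fin r => x i ^ (l j + (r - 1 - (j : ℕ)))).map (starRingEnd ℂ)
        = Matrix.of (fun i j : Fin r => x i *
            ((Matrix.of fun i j : Fin r =>
              x i ^ (conjPartition r k l j + (r - 1 - (j : ℕ)))).submatrix id Fin.rev) i j) := by
      ext i j
      simp only [Matrix.map_apply, Matrix.of_apply, Matrix.submatrix_apply, id]
      rw [hcpow i _ (by have := hl j; have := j.isLt; omega), mul_comm]
      congr 1
      have h2 : conjPartition r k l (Fin.rev j) = k - l j := by
        simp [conjPartition, Fin.rev_rev]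
      have h3 : ((Fin.rev j : Fin r) : ℕ) = r - ((j : ℕ) + 1) := Fin.val_rev j
      rw [h2, h3]
      congr 1
      have := hl j
      have := j.isLt
      omega
    rw [hmat, Matrix.det_mul_column]
    have hsub : ((Matrix.of fun i j : Fin r =>
        x i ^ (conjPartition r k l j + (r - 1 - (j : ℕ)))).submatrix id Fin.rev)
        = ((Matrix.of fun i j : Fin r =>
        x i ^ (conjPartition r k l j + (r - 1 - (j : ℕ)))).submatrix id ⇑(Fin.revPerm)) := rfl
    rw [hsub, Matrix.det_permute', sign_revPerm, ← hN'def]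
    push_cast
    ring
  -- denominator relation
  have hc1 : ∀ i : Fin r, (Finset.univ.filter (fun j : Fin r => i < j)).card = r - 1 - (i : ℕ) := by
    intro i
    rw [Finset.filter_lt_eq_Ioi, Fin.card_Ioi]
  have hc2 : ∀ j : Fin r, (Finset.univ.filter (fun i : Fin r => i < j)).card = (j : ℕ) := by
    intro j
    rw [Finset.filter_gt_eq_Iio, Fin.card_Iio]
  have hQ : (∏ i, ∏ j ∈ Finset.univ.filter (fun j : Fin r => i < j), (x i * x j))
      = p ^ (r - 1) := by
    have hsplit : (∏ i, ∏ j ∈ Finset.univ.filter (fun j : Fin r => i < j), (x i * x j))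
        = (∏ i, x i ^ (r - 1 - (i : ℕ))) *
          ∏ i, ∏ j ∈ Finset.univ.filter (fun j : Fin r => i < j), x j := by
      rw [← Finset.prod_mul_distrib]
      refine Finset.prod_congr rfl fun i _ => ?_
      rw [Finset.prod_mul_distrib, Finset.prod_const, hc1 i]
    have hswap : (∏ i, ∏ j ∈ Finset.univ.filter (fun j : Fin r => i < j), x j)
        = ∏ j : Fin r, x j ^ (j : ℕ) := by
      rw [Finset.prod_comm' (t' := Finset.univ)
        (s' := fun j => Finset.univ.filter (fun i : Fin r => i < j)) (by simp)]
      refine Finset.prod_congr rfl fun j _ => ?_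
      rw [Finset.prod_const, hc2 j]
    rw [hsplit, hswap, ← Finset.prod_mul_distrib, hpdef, ← Finset.prod_pow]
    refine Finset.prod_congr rfl fun i _ => ?_
    rw [← pow_add]
    congr 1
    have := i.isLt
    omega
  have hDen : (starRingEnd ℂ) D * p ^ (r - 1) = ((-1 : ℂ) ^ T) * D := by
    have hstep : (starRingEnd ℂ) D *
        (∏ i, ∏ j ∈ Finset.univ.filter (fun j : Fin r => i < j), (x i * x j))
        = ∏ i, ∏ j ∈ Finset.univ.filter (fun j : Fin r => i < j), (-(x i - x j)) := by
      rw [hDdef, map_prod, ← Finset.prod_mul_distrib]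
      refine Finset.prod_congr rfl fun i _ => ?_
      rw [map_prod, ← Finset.prod_mul_distrib]
      refine Finset.prod_congr rfl fun j _ => ?_
      rw [map_sub, hxc i, hxc j]
      have hi : (x i)⁻¹ * x i = 1 := inv_mul_cancel₀ (hx0 i)
      have hj : (x j)⁻¹ * x j = 1 := inv_mul_cancel₀ (hx0 j)
      linear_combination x j * hi - x i * hj
    have hneg : (∏ i, ∏ j ∈ Finset.univ.filter (fun j : Fin r => i < j), (-(x i - x j)))
        = ((-1 : ℂ) ^ T) * D := by
      have hsign : (∏ i : Fin r, ∏ _j ∈ Finset.univ.filter (fun j : Fin r => i < j), (-1 : ℂ))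
          = (-1 : ℂ) ^ T := by
        simp only [Finset.prod_const]
        rw [Finset.prod_pow_eq_pow_sum]
        congr 1
        rw [Finset.sum_congr rfl fun i _ => hc1 i, hTdef,
          Fin.sum_univ_eq_sum_range (fun i => r - 1 - i) r]
        have := Finset.sum_range_reflect (fun j => j) r
        simpa using this
      have hne : ∀ (i : Fin r) (j : Fin r), -(x i - x j) = (-1 : ℂ) * (x i - x j) :=
        fun i j => by ring
      simp_rw [hne, Finset.prod_mul_distrib]
      rw [hsign, ← hDdef]
    rw [← hQ, hstep, hneg]
  -- final assembly
  show N' / D = (starRingEnd ℂ) (N / D) * p ^ k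
  rw [map_div₀]
  by_cases hD0 : D = 0
  · simp [hD0]
  · have hcD0 : (starRingEnd ℂ) D ≠ 0 := by
      intro h
      apply hD0
      have := congrArg (starRingEnd ℂ) h
      simpa using this
    rw [div_mul_eq_mul_div, div_eq_div_iff hD0 hcD0]
    have hpr : p ^ (r - 1) ≠ 0 := pow_ne_zero _ hp
    apply mul_right_cancel₀ hpr
    have h3 : p * p ^ k * p ^ (r - 1) = 1 := by
      rw [mul_assoc, ← pow_add, ← pow_succ']
      have he : k + (r - 1) + 1 = r + k := by omega
      rw [he, hpm]
    calc N' * (starRingEnd ℂ) D * p ^ (r - 1)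
        = N' * ((starRingEnd ℂ) D * p ^ (r - 1)) := by ring
      _ = N' * ((-1 : ℂ) ^ T * D) := by rw [hDen]
      _ = (starRingEnd ℂ) N * p ^ k * D * p ^ (r - 1) := by
          rw [hNum]
          linear_combination (-((-1 : ℂ) ^ T * N' * D)) * h3

/-- For `x_j = exp(2πi n_j/(r+k))` an `r`-tuple of distinct `(r+k)`-th roots of unity
(`0 ≤ n_r < … < n₁ < r+k`) and `λ ∈ P_{r,k}`, one has the bialternant formula
`s_λ(x) = det(x_i^{λ^j+r−j})/∏_{i<j}(x_i − x_j)`, and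
`s_{λ*}(x) = conj(s_λ(x)) · (x₁⋯x_r)^k`. -/
theorem schur_conjugate_on_roots_of_unity (r k : ℕ) (hr : 0 < r) (hk : 0 < k)
    (n : Fin r → ℕ) (hanti : StrictAnti n) (hlt : ∀ i, n i < r + k)
    (l : Fin r → ℕ) (hbox : InBox r k l)
    (x : Fin r → ℂ)
    (hx : ∀ i, x i = Complex.exp (2 * Real.pi * Complex.I * (n i : ℂ) / ((r + k : ℕ) : ℂ))) :
    schurEval r l x =
      (Matrix.of fun i j : Fin r => x i ^ (l j + (r - 1 - (j : ℕ)))).det /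
        ∏ i, ∏ j ∈ Finset.univ.filter (fun j : Fin r => i < j), (x i - x j) ∧
    schurEval r (conjPartition r k l) x =
      (starRingEnd ℂ) (schurEval r l x) * (∏ i, x i) ^ k := by
  have hmne : ((r + k : ℕ) : ℂ) ≠ 0 := Nat.cast_ne_zero.2 (by omega)
  have hx0 : ∀ i, x i ≠ 0 := fun i => by rw [hx i]; exact Complex.exp_ne_zero _
  have hxm : ∀ i, x i ^ (r + k) = 1 := by
    intro i
    rw [hx i, ← Complex.exp_nat_mul, mul_comm, div_mul_cancel₀ _ hmne]
    have h2 : (2 * (Real.pi : ℂ) * Complex.I * (n i : ℂ))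
        = (n i : ℂ) * (2 * Real.pi * Complex.I) := by ring
    rw [h2, Complex.exp_nat_mul_two_pi_mul_I]
  have hxc : ∀ i, (starRingEnd ℂ) (x i) = (x i)⁻¹ := by
    intro i
    rw [hx i, ← Complex.exp_conj, ← Complex.exp_neg]
    congr 1
    simp only [map_div₀, map_mul, Complex.conj_I, Complex.conj_ofReal, map_ofNat,
      Complex.conj_natCast]
    ring
  exact ⟨rfl, schur_conj_aux r k hr l hbox.1 x hx0 hxm hxc⟩
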